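/- Let h : ℝ → ℝ and a ≤ b with h(a) ≤ 0 ≤ h(b), and suppose that for all x ∈ [a,b], liminf_{z→x⁻} h(z) ≥ h(x) ≥ limsup_{z→x⁺} h(z). Then there exist c₁, c₂ ∈ [a,b] with h(c₁) = 0 = h(c₂) such that every zero c ∈ [a,b] of h satisfies c₁ ≤ c ≤ c₂; i.e., h has a least and a greatest zero in [a,b]. -/

import Mathlib

open Filter

lemma ev_neg {F : Filter ℝ} {f : ℝ → ℝ} (hf : limsup f F < 0) : ∀ᶠ x in F, f x < 0 := by
  by_cases hbd : F.IsBoundedUnder (· ≤ ·) f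
  · exact eventually_lt_of_limsup_lt hf hbd
  · exfalso
    have hb' : ¬ ∃ b, ∀ᶠ x in F, f x ≤ b := by
      simpa [IsBoundedUnder, IsBounded, eventually_map] using hbd
    rw [limsup_eq] at hf
    have hemp : {a | ∀ᶠ x in F, f x ≤ a} = ∅ := by
      ext y; simp only [Set.mem_setOf_eq, Set.mem_empty_iff_false, iff_false]
      exact fun hy => hb' ⟨y, hy⟩
    rw [hemp, Real.sInf_empty] at hf
    linarith

lemma ev_pos {F : Filter ℝ} {f : ℝ → ℝ} (hf : 0 < liminf f F) : ∀ᶠ x in F, 0 < f x := by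
  by_cases hbd : F.IsBoundedUnder (· ≥ ·) f
  · exact eventually_lt_of_lt_liminf hf hbd
  · exfalso
    have hb' : ¬ ∃ b, ∀ᶠ x in F, b ≤ f x := by
      simpa [IsBoundedUnder, IsBounded, eventually_map] using hbd
    rw [liminf_eq] at hf
    have hemp : {a | ∀ᶠ x in F, a ≤ f x} = ∅ := by
      ext y; simp only [Set.mem_setOf_eq, Set.mem_empty_iff_false, iff_false]
      exact fun hy => hb' ⟨y, hy⟩
    rw [hemp, Real.sSup_empty] at hf
    linarith

lemma least_zero (a b : ℝ) (hab : a ≤ b) (h : ℝ → ℝ)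
    (ha : h a < 0) (hb : 0 ≤ h b)
    (hsemi : ∀ x ∈ Set.Icc a b,
      Filter.liminf h (nhdsWithin x (Set.Iio x)) ≥ h x ∧
      h x ≥ Filter.limsup h (nhdsWithin x (Set.Ioi x))) :
    ∃ c ∈ Set.Icc a b, h c = 0 ∧ ∀ z ∈ Set.Icc a b, h z = 0 → c ≤ z := by
  set S : Set ℝ := {x | x ∈ Set.Icc a b ∧ ∀ y ∈ Set.Icc a x, h y < 0} with hS
  have haS : a ∈ S := ⟨⟨le_refl a, hab⟩, fun y hy => by
    have : y = a := le_antisymm hy.2 hy.1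
    rw [this]; exact ha⟩
  have hne : S.Nonempty := ⟨a, haS⟩
  have hbdd : BddAbove S := ⟨b, fun x hx => hx.1.2⟩
  set c := sSup S with hc
  have hac : a ≤ c := le_csSup hbdd haS
  have hcb : c ≤ b := csSup_le hne fun x hx => hx.1.2
  have hneg : ∀ x, a ≤ x → x < c → h x < 0 := by
    intro x hax hxc
    obtain ⟨t, htS, hxt⟩ := exists_lt_of_lt_csSup hne hxc
    exact htS.2 x ⟨hax, le_of_lt hxt⟩
  obtain ⟨h1, h2⟩ := hsemi c ⟨hac, hcb⟩
  have hc0 : h c = 0 := by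
    rcases lt_trichotomy (h c) 0 with hlt | heq | hgt
    · exfalso
      have hcb' : c < b := lt_of_le_of_ne hcb (fun he => by rw [he] at hlt; linarith)
      have hev : ∀ᶠ z in nhdsWithin c (Set.Ioi c), h z < 0 := ev_neg (lt_of_le_of_lt h2 hlt)
      obtain ⟨u, hcu, hu⟩ := (mem_nhdsGT_iff_exists_Ioo_subset).1 hev
      have hcu' : c < u := hcu
      set t := min ((c + u) / 2) b with ht
      have hct : c < t := lt_min (by linarith) hcb'
      have htS : t ∈ S := by
        refine ⟨⟨le_trans hac (le_of_lt hct), min_le_right _ _⟩, ?_⟩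
        intro y hy
        rcases lt_trichotomy y c with h' | h' | h'
        · exact hneg y hy.1 h'
        · rw [h']; exact hlt
        · exact hu ⟨h', lt_of_le_of_lt (le_trans hy.2 (min_le_left _ _)) (by linarith)⟩
      exact absurd (le_csSup hbdd htS) (not_le.2 hct)
    · exact heq
    · exfalso
      have hac' : a < c := lt_of_le_of_ne hac (fun he => by rw [← he] at hgt; linarith)
      have hev : ∀ᶠ z in nhdsWithin c (Set.Iio c), 0 < h z := ev_pos (lt_of_lt_of_le hgt h1)
      have hmem : Set.Ioo a c ∈ nhdsWithin c (Set.Iio c) := Ioo_mem_nhdsLT hac'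
      obtain ⟨z, hz1, hz2⟩ := (hev.and (eventually_of_mem hmem fun z hz => hz)).exists
      exact absurd hz1 (not_lt.2 (le_of_lt (hneg z (le_of_lt hz2.1) hz2.2)))
  refine ⟨c, ⟨hac, hcb⟩, hc0, ?_⟩
  intro z hz hz0
  by_contra hzc
  push_neg at hzc
  exact absurd hz0 (ne_of_lt (hneg z hz.1 hzc))

lemma greatest_zero (a b : ℝ) (hab : a ≤ b) (h : ℝ → ℝ)
    (ha : h a ≤ 0) (hb : 0 < h b)
    (hsemi : ∀ x ∈ Set.Icc a b,
      Filter.liminf h (nhdsWithin x (Set.Iio x)) ≥ h x ∧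
      h x ≥ Filter.limsup h (nhdsWithin x (Set.Ioi x))) :
    ∃ c ∈ Set.Icc a b, h c = 0 ∧ ∀ z ∈ Set.Icc a b, h z = 0 → z ≤ c := by
  set S : Set ℝ := {x | x ∈ Set.Icc a b ∧ ∀ y ∈ Set.Icc x b, 0 < h y} with hS
  have hbS : b ∈ S := ⟨⟨hab, le_refl b⟩, fun y hy => by
    have : y = b := le_antisymm hy.2 hy.1
    rw [this]; exact hb⟩
  have hne : S.Nonempty := ⟨b, hbS⟩
  have hbdd : BddBelow S := ⟨a, fun x hx => hx.1.1⟩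
  set c := sInf S with hc
  have hcb : c ≤ b := csInf_le hbdd hbS
  have hac : a ≤ c := le_csInf hne fun x hx => hx.1.1
  have hpos : ∀ x, c < x → x ≤ b → 0 < h x := by
    intro x hcx hxb
    obtain ⟨t, htS, hxt⟩ := exists_lt_of_csInf_lt hne hcx
    exact htS.2 x ⟨le_of_lt hxt, hxb⟩
  obtain ⟨h1, h2⟩ := hsemi c ⟨hac, hcb⟩
  have hc0 : h c = 0 := by
    rcases lt_trichotomy (h c) 0 with hlt | heq | hgt
    · exfalso
      have hcb' : c < b := lt_of_le_of_ne hcb (fun he => by rw [he] at hlt; linarith)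
      have hev : ∀ᶠ z in nhdsWithin c (Set.Ioi c), h z < 0 := ev_neg (lt_of_le_of_lt h2 hlt)
      have hmem : Set.Ioo c b ∈ nhdsWithin c (Set.Ioi c) := Ioo_mem_nhdsGT hcb'
      obtain ⟨z, hz1, hz2⟩ := (hev.and (eventually_of_mem hmem fun z hz => hz)).exists
      exact absurd hz1 (not_lt.2 (le_of_lt (hpos z hz2.1 (le_of_lt hz2.2))))
    · exact heq
    · exfalso
      have hac' : a < c := lt_of_le_of_ne hac (fun he => by rw [← he] at hgt; linarith)
      have hev : ∀ᶠ z in nhdsWithin c (Set.Iio c), 0 < h z := ev_pos (lt_of_lt_of_le hgt h1)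
      obtain ⟨u, hcu, hu⟩ := (mem_nhdsLT_iff_exists_Ioo_subset).1 hev
      have hcu' : u < c := hcu
      set t := max ((c + u) / 2) a with ht
      have hct : t < c := max_lt (by linarith) hac'
      have htS : t ∈ S := by
        refine ⟨⟨le_max_right _ _, le_trans (le_of_lt hct) hcb⟩, ?_⟩
        intro y hy
        rcases lt_trichotomy y c with h' | h' | h'
        · exact hu ⟨lt_of_lt_of_le (by linarith : u < (c + u) / 2)
            (le_trans (le_max_left _ _) hy.1), h'⟩
        · rw [h']; exact hgt
        · exact hpos y h' hy.2
      exact absurd (csInf_le hbdd htS) (not_le.2 hct)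
  refine ⟨c, ⟨hac, hcb⟩, hc0, ?_⟩
  intro z hz hz0
  by_contra hzc
  push_neg at hzc
  exact absurd hz0 (ne_of_gt (hpos z hzc hz.2))

theorem stmt_19 (a b : ℝ) (hab : a ≤ b) (h : ℝ → ℝ)
    (ha : h a ≤ 0) (hb : 0 ≤ h b)
    (hsemi : ∀ x ∈ Set.Icc a b,
      Filter.liminf h (nhdsWithin x (Set.Iio x)) ≥ h x ∧
      h x ≥ Filter.limsup h (nhdsWithin x (Set.Ioi x))) :
    ∃ c₁ ∈ Set.Icc a b, ∃ c₂ ∈ Set.Icc a b,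
      h c₁ = 0 ∧ h c₂ = 0 ∧
      ∀ c ∈ Set.Icc a b, h c = 0 → c₁ ≤ c ∧ c ≤ c₂ := by
  have H1 : ∃ c ∈ Set.Icc a b, h c = 0 ∧ ∀ z ∈ Set.Icc a b, h z = 0 → c ≤ z := by
    rcases eq_or_lt_of_le ha with he | hlt
    · exact ⟨a, ⟨le_refl a, hab⟩, he, fun z hz _ => hz.1⟩
    · exact least_zero a b hab h hlt hb hsemi
  have H2 : ∃ c ∈ Set.Icc a b, h c = 0 ∧ ∀ z ∈ Set.Icc a b, h z = 0 → z ≤ c := by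
    rcases eq_or_lt_of_le hb with he | hlt
    · exact ⟨b, ⟨hab, le_refl b⟩, he.symm, fun z hz _ => hz.2⟩
    · exact greatest_zero a b hab h ha hlt hsemi
  obtain ⟨c₁, hc₁m, hc₁0, hc₁le⟩ := H1
  obtain ⟨c₂, hc₂m, hc₂0, hc₂le⟩ := H2
  exact ⟨c₁, hc₁m, c₂, hc₂m, hc₁0, hc₂0, fun c hc hc0 => ⟨hc₁le c hc hc0, hc₂le c hc hc0⟩⟩
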